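/- Let G be a simple graph on n ≥ 2 vertices with adjacency matrix A, let λ₁ > 0 be its largest eigenvalue, set λ(A) := max(λ₂(A), |λ_n(A)|) and ρ := λ(A)/λ₁, and let u := n^{−1/2}(1,…,1). Suppose there is a unit-norm eigenvector v₁ of A for λ₁ with ‖v₁ − u‖_∞ ≤ ε₀/√n for some ε₀ ∈ [0,1). Then for every vertex i and every positive integer d, the number of vertices j such that (Aᵈ)_{ij} = 0 is at most n²·ρ^{2d}/(1−ε₀)⁴. -/

import Mathlib

set_option maxHeartbeats 1600000

open Matrix RealInnerProductSpace in
lemma inner_expand {n : ℕ} (E : OrthonormalBasis (Fin n) ℝ (EuclideanSpace ℝ (Fin n)))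
    (x y : EuclideanSpace ℝ (Fin n)) :
    ∑ j, x j * y j = ∑ m, (∑ j, E m j * x j) * (∑ j, E m j * y j) := by
  have h2 : ∀ (u v : EuclideanSpace ℝ (Fin n)), ⟪u, v⟫ = ∑ j, u j * v j := by
    intro u v; simp [PiLp.inner_apply]
    exact Finset.sum_congr rfl fun j _ => mul_comm _ _
  rw [← h2, ← E.sum_inner_mul_inner x y]
  refine Finset.sum_congr rfl fun m _ => ?_
  rw [← real_inner_comm x (E m), h2, h2]

open Matrix in
lemma pow_mulVec_eig {n : ℕ} (A : Matrix (Fin n) (Fin n) ℝ) (v : Fin n → ℝ) (μ : ℝ)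
    (h : A *ᵥ v = μ • v) (d : ℕ) : (A ^ d) *ᵥ v = μ ^ d • v := by
  induction d with
  | zero => simp
  | succ k ih =>
      rw [pow_succ, ← Matrix.mulVec_mulVec, h, Matrix.mulVec_smul, ih, smul_smul, pow_succ]
      ring_nf

open Matrix RealInnerProductSpace in
lemma pow_mulVec_expand {n : ℕ} (A : Matrix (Fin n) (Fin n) ℝ)
    (E : OrthonormalBasis (Fin n) ℝ (EuclideanSpace ℝ (Fin n))) (ν : Fin n → ℝ)
    (heig : ∀ m, A *ᵥ ⇑(E m) = ν m • ⇑(E m)) (d : ℕ) (x : Fin n → ℝ) :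
    (A ^ d) *ᵥ x = ∑ m, ((∑ j, E m j * x j) * ν m ^ d) • (⇑(E m) : Fin n → ℝ) := by
  have heigd : ∀ m, (A ^ d) *ᵥ ⇑(E m) = ν m ^ d • ⇑(E m) :=
    fun m => pow_mulVec_eig A _ _ (heig m) d
  have h : ∑ m, (∑ j, E m j * x j) • E m = (WithLp.toLp 2 x : EuclideanSpace ℝ (Fin n)) := by
    rw [← E.sum_repr' (WithLp.toLp 2 x : EuclideanSpace ℝ (Fin n))]
    refine Finset.sum_congr rfl fun m _ => ?_
    congr 1
    simp [PiLp.inner_apply, mul_comm]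
  have hx : x = ∑ m, (∑ j, E m j * x j) • (⇑(E m) : Fin n → ℝ) := by
    have h2 := congrArg (WithLp.linearEquiv 2 ℝ (Fin n → ℝ)) h
    rw [map_sum] at h2
    simp only [LinearEquiv.map_smul] at h2
    exact h2.symm
  conv_lhs => rw [hx]
  rw [show ∀ y : Fin n → ℝ, (A ^ d) *ᵥ y = (A ^ d).mulVecLin y from fun _ => rfl]
  rw [map_sum]
  refine Finset.sum_congr rfl fun m _ => ?_
  rw [LinearMap.map_smul, Matrix.mulVecLin_apply, heigd, smul_smul]

/-- Let `G` be a simple graph on `n ≥ 2` vertices with adjacency matrix `A`,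
let `λ₁ > 0` be its largest eigenvalue, set `λ(A) := max(λ₂(A), |λ_n(A)|)` and
`ρ := λ(A)/λ₁`, and let `u := n^{−1/2}(1,…,1)`.  Suppose there is a unit-norm eigenvector
`v₁` of `A` for `λ₁` with `‖v₁ − u‖_∞ ≤ ε₀/√n` for some `ε₀ ∈ [0,1)`.  Then for every
vertex `i` and every positive integer `d`, the number of vertices `j` with `(Aᵈ)_{ij} = 0`
is at most `n²·ρ^{2d}/(1−ε₀)⁴`. -/
theorem stmt13 (n : ℕ) (hn : 2 ≤ n) (G : SimpleGraph (Fin n)) [DecidableRel G.Adj]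
    (A : Matrix (Fin n) (Fin n) ℝ) (hAdef : A = G.adjMatrix ℝ) (hA : A.IsHermitian)
    (ev : Fin n → ℝ) (σ : Equiv.Perm (Fin n))
    (hev : ev = hA.eigenvalues ∘ σ) (hsort : Antitone ev)
    (hpos : 0 < ev ⟨0, by omega⟩)
    (v₁ : Fin n → ℝ) (hv : A.mulVec v₁ = ev ⟨0, by omega⟩ • v₁) (hunit : ∑ i, v₁ i ^ 2 = 1)
    (ε₀ : ℝ) (hε₀0 : 0 ≤ ε₀) (hε₀1 : ε₀ < 1)
    (hinf : ∀ i, |v₁ i - (Real.sqrt n)⁻¹| ≤ ε₀ / Real.sqrt n) :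
    ∀ i : Fin n, ∀ d : ℕ, 1 ≤ d →
      (({j : Fin n | (A ^ d) i j = 0}.ncard : ℝ)) ≤
        (n : ℝ) ^ 2 * (max (ev ⟨1, by omega⟩) |ev ⟨n - 1, by omega⟩| / ev ⟨0, by omega⟩) ^ (2 * d)
          / (1 - ε₀) ^ 4 := by
  classical
  intro i d hd
  set lam : ℝ := max (ev ⟨1, by omega⟩) |ev ⟨n - 1, by omega⟩| with hlamdef
  set l1 : ℝ := ev ⟨0, by omega⟩ with hl1def
  have hl1 : 0 < l1 := hpos
  have hlam0 : (0:ℝ) ≤ lam := le_trans (abs_nonneg _) (le_max_right _ _)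
  have hc : (0:ℝ) < 1 - ε₀ := by linarith
  have hn0 : (0:ℝ) < n := by positivity
  have hsqn : (0:ℝ) < Real.sqrt n := Real.sqrt_pos.2 hn0
  have hsqn2 : Real.sqrt n * Real.sqrt n = n := Real.mul_self_sqrt (le_of_lt hn0)
  set S : Finset (Fin n) := Finset.univ.filter (fun j => (A ^ d) i j = 0) with hSdef
  have hZS : ({j : Fin n | (A ^ d) i j = 0}.ncard : ℝ) = S.card := by
    rw [Set.ncard_eq_toFinset_card']
    congr 1
    simp [hSdef, Set.toFinset_setOf]
  rw [hZS]
  have hK0 : (0:ℝ) ≤ S.card := by positivity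
  have hKn : (S.card : ℝ) ≤ n := by
    have : S.card ≤ n := le_trans (Finset.card_le_card (Finset.filter_subset _ _)) (by simp)
    exact_mod_cast this
  rcases le_or_gt l1 lam with hcase | hcase
  · -- trivial case: ρ ≥ 1
    have h1 : (1:ℝ) ≤ lam / l1 := (one_le_div hl1).2 hcase
    have h2 : (1:ℝ) ≤ (lam / l1) ^ (2 * d) := one_le_pow₀ h1
    have h3 : (0:ℝ) < (1 - ε₀) ^ 4 := by positivity
    have h4 : (1 - ε₀) ^ 4 ≤ 1 := pow_le_one₀ (by linarith) (by linarith)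
    have hn2' : (2:ℝ) ≤ n := by exact_mod_cast hn
    have hn2 : (n:ℝ) ≤ (n:ℝ) ^ 2 := by nlinarith
    rw [le_div_iff₀ h3]
    calc (S.card : ℝ) * (1 - ε₀) ^ 4 ≤ (S.card : ℝ) * 1 :=
          mul_le_mul_of_nonneg_left h4 hK0
      _ = (S.card : ℝ) := mul_one _
      _ ≤ (n : ℝ) := hKn
      _ ≤ (n : ℝ) ^ 2 := hn2
      _ = (n : ℝ) ^ 2 * 1 := (mul_one _).symm
      _ ≤ (n : ℝ) ^ 2 * (lam / l1) ^ (2 * d) :=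
          mul_le_mul_of_nonneg_left h2 (sq_nonneg _)
  · -- main case: lam < l1
    set E : OrthonormalBasis (Fin n) ℝ (EuclideanSpace ℝ (Fin n)) :=
      hA.eigenvectorBasis.reindex σ.symm with hEdef
    have heig : ∀ m, A.mulVec ⇑(E m) = ev m • ⇑(E m) := by
      intro m
      have : E m = hA.eigenvectorBasis (σ m) := by
        simp [hEdef, OrthonormalBasis.reindex_apply]
      rw [this, hev]
      exact hA.mulVec_eigenvectorBasis (σ m)
    have hbound : ∀ m : Fin n, m ≠ ⟨0, by omega⟩ → |ev m| ≤ lam := by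
      intro m hm
      have hm0 : m.val ≠ 0 := fun h => hm (Fin.ext h)
      have hmlt := m.isLt
      have hm1 : (⟨1, by omega⟩ : Fin n) ≤ m := by
        rw [Fin.le_def]; simp; omega
      have hmn : m ≤ (⟨n - 1, by omega⟩ : Fin n) := by
        rw [Fin.le_def]; simp; omega
      have hup : ev m ≤ ev ⟨1, by omega⟩ := hsort hm1
      have hlow : ev ⟨n - 1, by omega⟩ ≤ ev m := hsort hmn
      rw [abs_le]
      constructor
      · have := neg_abs_le (ev ⟨n - 1, by omega⟩)
        have h2 : |ev ⟨n - 1, by omega⟩| ≤ lam := le_max_right _ _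
        linarith
      · exact le_trans hup (le_max_left _ _)
    -- coordinates of v₁
    obtain ⟨dd, hdddef⟩ : ∃ dd : Fin n → ℝ, dd = fun m => ∑ j, E m j * v₁ j := ⟨_, rfl⟩
    have hAT : Matrix.transpose A = A := by rw [hAdef]; exact G.transpose_adjMatrix
    have hsym : ∀ (m : Fin n) (y : Fin n → ℝ),
        ∑ j, E m j * (A.mulVec y) j = ev m * ∑ j, E m j * y j := by
      intro m y
      have h1 : ∑ j, E m j * (A.mulVec y) j
          = dotProduct (⇑(E m) : Fin n → ℝ) (A.mulVec y) := rfl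
      rw [h1, Matrix.dotProduct_mulVec, ← Matrix.mulVec_transpose, hAT, heig]
      simp [smul_dotProduct, dotProduct, Finset.mul_sum]
      exact Finset.sum_congr rfl fun j _ => by ring
    have hdd : ∀ m : Fin n, m ≠ ⟨0, by omega⟩ → dd m = 0 := by
      intro m hm
      have h1 := hsym m v₁
      rw [hv] at h1
      have h2 : ∑ j, E m j * (l1 • v₁) j = l1 * dd m := by
        simp [hdddef, Finset.mul_sum]
        exact Finset.sum_congr rfl fun j _ => by ring
      rw [h2] at h1
      rw [show (∑ j, E m j * v₁ j) = dd m from by rw [hdddef]] at h1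
      have h3 : |ev m| ≤ lam := hbound m hm
      have hne : ev m - l1 ≠ 0 := by
        have : ev m ≤ lam := le_trans (le_abs_self _) h3
        intro h; rw [sub_eq_zero] at h; rw [h] at this; linarith
      have : (ev m - l1) * dd m = 0 := by linear_combination -h1
      rcases mul_eq_zero.1 this with h | h
      · exact absurd h hne
      · exact h
    have hdd0 : dd ⟨0, by omega⟩ ^ 2 = 1 := by
      have hp := inner_expand E (WithLp.toLp 2 v₁ : EuclideanSpace ℝ (Fin n))
        (WithLp.toLp 2 v₁ : EuclideanSpace ℝ (Fin n))
      simp only [PiLp.toLp_apply] at hp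
      have hl : ∑ j, v₁ j * v₁ j = 1 := by
        rw [← hunit]; exact Finset.sum_congr rfl fun j _ => (sq (v₁ j)).symm ▸ (by ring)
      rw [hl] at hp
      simp only [show ∀ m, (∑ j, E m j * v₁ j) = dd m from fun m => by rw [hdddef]] at hp
      have h2 : ∑ m, dd m * dd m = dd ⟨0, by omega⟩ * dd ⟨0, by omega⟩ := by
        refine Finset.sum_eq_single _ (fun m _ hm => by rw [hdd m hm]; ring) (by simp)
      rw [h2] at hp
      rw [sq]; exact hp.symm
    -- indicator vector of S
    obtain ⟨χ, hchidef⟩ : ∃ χ : Fin n → ℝ, χ = fun j => if j ∈ S then 1 else 0 := ⟨_, rfl⟩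
    have hχsum : ∑ j, χ j * χ j = S.card := by
      have h1 : ∀ j, χ j * χ j = χ j := fun j => by
        by_cases h : j ∈ S <;> simp [hchidef, h]
      rw [Finset.sum_congr rfl fun j _ => h1 j]
      simp [hchidef]
    obtain ⟨b, hbdef⟩ : ∃ b : ℝ, b = ∑ j, χ j * v₁ j := ⟨_, rfl⟩
    have hP : (0:ℝ) < (1 - ε₀) / Real.sqrt n := by positivity
    have hvlow : ∀ j, (1 - ε₀) / Real.sqrt n ≤ v₁ j := by
      intro j
      have h2 := abs_le.1 (hinf j)
      have he : (1 - ε₀) / Real.sqrt n = (Real.sqrt n)⁻¹ - ε₀ / Real.sqrt n := by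
        field_simp
      linarith [h2.1]
    have hb_low : (S.card : ℝ) * ((1 - ε₀) / Real.sqrt n) ≤ b := by
      have h1 : b = ∑ j ∈ S, v₁ j := by
        rw [hbdef]
        rw [show (fun j => χ j * v₁ j) = fun j => if j ∈ S then v₁ j else 0 from
          funext fun j => by by_cases h : j ∈ S <;> simp [hchidef, h]]
        simp [Finset.sum_ite_mem]
      rw [h1]
      have := Finset.card_nsmul_le_sum S v₁ ((1 - ε₀) / Real.sqrt n) (fun j _ => hvlow j)
      simpa [nsmul_eq_mul] using this
    have hb0 : (0:ℝ) ≤ b := le_trans (by positivity) hb_low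
    obtain ⟨w, hwdef⟩ : ∃ w : Fin n → ℝ, w = fun j => χ j - b * v₁ j := ⟨_, rfl⟩
    have hv1sq : ∑ j, v₁ j * v₁ j = 1 := by
      rw [← hunit]; exact Finset.sum_congr rfl fun j _ => by ring
    have hworth : ∑ j, w j * v₁ j = 0 := by
      have h1 : ∑ j, w j * v₁ j = (∑ j, χ j * v₁ j) - b * ∑ j, v₁ j * v₁ j := by
        rw [Finset.mul_sum, ← Finset.sum_sub_distrib]
        exact Finset.sum_congr rfl fun j _ => by simp [hwdef]; ring
      rw [h1, hv1sq, ← hbdef]; ring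
    have hwnorm : ∑ j, w j * w j ≤ (S.card : ℝ) := by
      have h1 : ∑ j, w j * w j
          = (∑ j, χ j * χ j) - 2 * b * (∑ j, χ j * v₁ j) + b^2 * ∑ j, v₁ j * v₁ j := by
        rw [Finset.mul_sum, Finset.mul_sum, ← Finset.sum_sub_distrib, ← Finset.sum_add_distrib]
        exact Finset.sum_congr rfl fun j _ => by simp [hwdef]; ring
      rw [h1, hχsum, ← hbdef, hv1sq]
      nlinarith [sq_nonneg b]
    -- coordinates of w
    obtain ⟨cw, hcwdef⟩ : ∃ cw : Fin n → ℝ, cw = fun m => ∑ j, E m j * w j := ⟨_, rfl⟩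
    have hcw_par : ∑ m, cw m * cw m = ∑ j, w j * w j := by
      have hp := (inner_expand E (WithLp.toLp 2 w) (WithLp.toLp 2 w)).symm
      simp only [PiLp.toLp_apply] at hp
      simp only [show ∀ m, (∑ j, E m j * w j) = cw m from fun m => by rw [hcwdef]] at hp
      exact hp
    have hcw0 : cw ⟨0, by omega⟩ = 0 := by
      have hp := inner_expand E (WithLp.toLp 2 w) (WithLp.toLp 2 v₁)
      simp only [PiLp.toLp_apply] at hp
      simp only [show ∀ m, (∑ j, E m j * w j) = cw m from fun m => by rw [hcwdef],
        show ∀ m, (∑ j, E m j * v₁ j) = dd m from fun m => by rw [hdddef]] at hp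
      rw [hworth] at hp
      have h1 : ∑ m, cw m * dd m = cw ⟨0, by omega⟩ * dd ⟨0, by omega⟩ := by
        refine Finset.sum_eq_single _ (fun m _ hm => by rw [hdd m hm]; ring) (by simp)
      rw [h1] at hp
      have hdd0ne : dd ⟨0, by omega⟩ ≠ 0 := by
        intro h; rw [h] at hdd0; simp at hdd0
      rcases mul_eq_zero.1 hp.symm with h | h
      · exact h
      · exact absurd h hdd0ne
    have hrow : ∑ m, E m i * E m i = 1 := by
      have hp := inner_expand E (WithLp.toLp 2 (Pi.single i 1 : Fin n → ℝ))
        (WithLp.toLp 2 (Pi.single i 1 : Fin n → ℝ))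
      simp only [PiLp.toLp_apply] at hp
      have h1 : ∑ j, (Pi.single i 1 : Fin n → ℝ) j * (Pi.single i 1 : Fin n → ℝ) j = 1 := by
        simp [Pi.single_apply]
      have h2 : ∀ m : Fin n, ∑ j, E m j * (Pi.single i 1 : Fin n → ℝ) j = E m i := by
        intro m; simp [Pi.single_apply]
      have h3 : ∑ m, E m i * E m i
          = ∑ m, (∑ j, E m j * (Pi.single i 1 : Fin n → ℝ) j)
              * (∑ j, E m j * (Pi.single i 1 : Fin n → ℝ) j) :=
        Finset.sum_congr rfl fun m _ => by rw [h2]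
      rw [h3, ← hp, h1]
    -- entry expansion
    have hexp := pow_mulVec_expand A E ev heig d w
    have hentry : (A ^ d).mulVec w i = ∑ m, cw m * ev m ^ d * E m i := by
      have h1 := congrFun hexp i
      rw [show (A ^ d).mulVec w i = ((A ^ d).mulVec w) i from rfl, h1, Finset.sum_apply]
      exact Finset.sum_congr rfl fun m _ => by simp [hcwdef]
    have hCS : ((A ^ d).mulVec w i)^2
        ≤ (∑ m, (cw m * ev m ^ d)^2) * (∑ m, E m i * E m i) := by
      rw [hentry]
      have := Finset.sum_mul_sq_le_sq_mul_sq Finset.univ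
        (fun m => cw m * ev m ^ d) (fun m => E m i)
      calc (∑ m, cw m * ev m ^ d * E m i)^2
          ≤ (∑ m, (cw m * ev m ^ d)^2) * (∑ m, (E m i)^2) := this
        _ = (∑ m, (cw m * ev m ^ d)^2) * (∑ m, E m i * E m i) := by
            congr 1; exact Finset.sum_congr rfl fun m _ => by ring
    have hspec : ∑ m, (cw m * ev m ^ d)^2 ≤ lam^(2*d) * S.card := by
      have key : ∀ m : Fin n, (cw m * ev m ^ d)^2 ≤ lam^(2*d) * (cw m)^2 := by
        intro m
        by_cases hm : m = ⟨0, by omega⟩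
        · rw [hm, hcw0]; simp
        · have h3 : |ev m| ≤ lam := hbound m hm
          have h4 : (ev m ^ d)^2 ≤ lam^(2*d) := by
            have e1 : (ev m ^ d)^2 = (ev m ^ 2)^d := by
              rw [← pow_mul, ← pow_mul, Nat.mul_comm]
            have e2 : lam^(2*d) = (lam ^ 2)^d := by rw [← pow_mul]
            rw [e1, e2]
            refine pow_le_pow_left₀ (sq_nonneg _) ?_ d
            exact sq_le_sq' (by linarith [neg_abs_le (ev m)]) (le_trans (le_abs_self _) h3)
          calc (cw m * ev m ^ d)^2 = (ev m ^ d)^2 * (cw m)^2 := by ring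
            _ ≤ lam^(2*d) * (cw m)^2 := mul_le_mul_of_nonneg_right h4 (sq_nonneg _)
      calc ∑ m, (cw m * ev m ^ d)^2 ≤ ∑ m, lam^(2*d) * (cw m)^2 :=
            Finset.sum_le_sum fun m _ => key m
        _ = lam^(2*d) * ∑ m, cw m * cw m := by
            rw [Finset.mul_sum]; exact Finset.sum_congr rfl fun m _ => by ring
        _ = lam^(2*d) * ∑ j, w j * w j := by rw [hcw_par]
        _ ≤ lam^(2*d) * S.card := by
            have : (0:ℝ) ≤ lam^(2*d) := by positivity
            exact mul_le_mul_of_nonneg_left hwnorm this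
    -- (A^d χ)_i = 0
    have hzero : (A ^ d).mulVec χ i = 0 := by
      have h1 : (A ^ d).mulVec χ i = ∑ j, (A ^ d) i j * χ j := rfl
      rw [h1, show (fun j => (A ^ d) i j * χ j) = fun j => if j ∈ S then (A ^ d) i j else 0 from
        funext fun j => by by_cases h : j ∈ S <;> simp [hchidef, h]]
      rw [Finset.sum_ite_mem, Finset.univ_inter]
      exact Finset.sum_eq_zero fun j hj => (Finset.mem_filter.1 hj).2
    have hvd := pow_mulVec_eig A v₁ l1 hv d
    have hsplit : (A ^ d).mulVec χ i = b * l1^d * v₁ i + (A ^ d).mulVec w i := by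
      have h1 : (A ^ d).mulVec χ = b • ((A ^ d).mulVec v₁) + (A ^ d).mulVec w := by
        rw [show χ = b • v₁ + w from funext fun j => by simp [hwdef], Matrix.mulVec_add,
          Matrix.mulVec_smul]
      rw [show (A ^ d).mulVec χ i = ((A ^ d).mulVec χ) i from rfl, h1, hvd]
      simp [Pi.add_apply, Pi.smul_apply, smul_eq_mul]
      ring
    have hkey : (b * l1^d * v₁ i)^2 ≤ lam^(2*d) * S.card := by
      have h1 : b * l1^d * v₁ i = -((A ^ d).mulVec w i) := by
        rw [hzero] at hsplit; linarith
      rw [h1, neg_sq]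
      calc ((A ^ d).mulVec w i)^2
          ≤ (∑ m, (cw m * ev m ^ d)^2) * (∑ m, E m i * E m i) := hCS
        _ = ∑ m, (cw m * ev m ^ d)^2 := by rw [hrow, mul_one]
        _ ≤ lam^(2*d) * S.card := hspec
    have hv1i : (1 - ε₀) / Real.sqrt n ≤ v₁ i := hvlow i
    have hLpos : (0:ℝ) < l1^d := pow_pos hl1 d
    set K : ℝ := (S.card : ℝ) with hKdef
    set P : ℝ := (1 - ε₀) / Real.sqrt n with hPdef
    have hblow2 : K * P * P * l1^d ≤ b * l1^d * v₁ i := by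
      have h1 : K * P ≤ b := hb_low
      have h2 : K * P * P ≤ b * v₁ i := mul_le_mul h1 hv1i (le_of_lt hP) hb0
      calc K * P * P * l1^d ≤ (b * v₁ i) * l1^d :=
            mul_le_mul_of_nonneg_right h2 (le_of_lt hLpos)
        _ = b * l1^d * v₁ i := by ring
    have h6 : (K * P * P * l1^d)^2 ≤ lam^(2*d) * K := by
      have h0 : (0:ℝ) ≤ K * P * P * l1^d :=
        mul_nonneg (mul_nonneg (mul_nonneg hK0 hP.le) hP.le) hLpos.le
      calc (K * P * P * l1^d)^2 ≤ (b * l1^d * v₁ i)^2 := by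
            exact pow_le_pow_left₀ h0 hblow2 2
        _ ≤ lam^(2*d) * K := hkey
    have hPP : P * P = (1 - ε₀)^2 / n := by
      rw [hPdef, div_mul_div_comm, hsqn2]; ring
    -- final arithmetic
    rw [le_div_iff₀ (by positivity : (0:ℝ) < (1 - ε₀)^4), div_pow, ← mul_div_assoc,
      le_div_iff₀ (pow_pos hl1 (2*d))]
    have hl12d : l1^(2*d) = (l1^d)^2 := by rw [← pow_mul, Nat.mul_comm]
    rcases eq_or_lt_of_le hK0 with hKz | hKpos
    · rw [← hKz]
      have : (0:ℝ) ≤ (n:ℝ)^2 * lam^(2*d) := by positivity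
      simpa using this
    · have h7 : (K * ((1 - ε₀)^2 / n) * l1^d)^2 ≤ lam^(2*d) * K := by
        rw [show K * ((1 - ε₀)^2 / n) * l1^d = K * P * P * l1^d from by rw [← hPP]; ring]
        exact h6
      have hexpand : (K * ((1 - ε₀)^2 / n) * l1^d)^2
          = K^2 * (1 - ε₀)^4 * (l1^d)^2 / (n:ℝ)^2 := by
        field_simp
      rw [hexpand] at h7
      have h9 := mul_le_mul_of_nonneg_right h7 (le_of_lt (show (0:ℝ) < (n:ℝ)^2 by positivity))
      rw [div_mul_cancel₀ _ (show ((n:ℝ)^2) ≠ 0 by positivity)] at h9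
      have h8 : (K * ((1 - ε₀)^4 * l1^(2*d))) * K ≤ ((n:ℝ)^2 * lam^(2*d)) * K := by
        rw [hl12d]; linear_combination h9
      have h10 := le_of_mul_le_mul_right h8 hKpos
      calc (S.card : ℝ) * (1 - ε₀)^4 * l1^(2*d) = K * ((1 - ε₀)^4 * l1^(2*d)) := by
            rw [hKdef]; ring
        _ ≤ (n:ℝ)^2 * lam^(2*d) := h10
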